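/- Let s ≥ 1 and let 1 ≤ i_1 < i_2 < ⋯ < i_s be a strictly increasing sequence of positive integers. Let g ∈ ℂ[y] be a polynomial with g(0) = 0 and deg g < i_s, and let K = ∏_{k=1}^s ((x + g(y)) + m^{i_k}) ⊆ ℂ[x,y] be the associated tower. Then the colength of K satisfies dim_ℂ ℂ[x,y]/K = ∑_{k=1}^s ∑_{j=1}^k i_j. -/

import Mathlib

open MvPolynomial

/-- The maximal ideal `m = (x, y)` of the origin in `ℂ[x,y]`. -/
noncomputable def mxy : Ideal (MvPolynomial (Fin 2) ℂ) :=
  Ideal.span {X 0, X 1}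

-- Lemma: (I+J)^n ≤ I + J^n
theorem add_pow_le' {R : Type*} [CommRing R] (I J : Ideal R) (n : ℕ) :
    (I + J) ^ n ≤ I + J ^ n := by
  induction n with
  | zero => simp
  | succ n ih =>
    rw [pow_succ]
    calc (I + J) ^ n * (I + J) ≤ (I + J ^ n) * (I + J) := Ideal.mul_mono_left ih
    _ ≤ I + J ^ (n+1) := by
        rw [mul_add, add_mul, add_mul, pow_succ]
        refine sup_le (sup_le ?_ ?_) (sup_le ?_ ?_)
        · exact le_sup_of_le_left Ideal.mul_le_right
        · exact le_sup_of_le_left Ideal.mul_le_right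
        · exact le_sup_of_le_left Ideal.mul_le_left
        · exact le_sup_right

theorem factor_eq (n : ℕ) :
    Ideal.span {(X 0 : MvPolynomial (Fin 2) ℂ)} + mxy ^ n =
      Ideal.span ((fun e => monomial e (1:ℂ)) ''
        {Finsupp.single 0 1, Finsupp.single 1 n}) := by
  have himg : ((fun e => monomial e (1:ℂ)) '' ({Finsupp.single 0 1, Finsupp.single 1 n} : Set (Fin 2 →₀ ℕ)))
      = {X 0, X 1 ^ n} := by
    rw [Set.image_pair, X_pow_eq_monomial]
    rfl
  have : Ideal.span ((fun e => monomial e (1:ℂ)) ''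
      ({Finsupp.single 0 1, Finsupp.single 1 n} : Set (Fin 2 →₀ ℕ))) =
      Ideal.span {X 0, X 1 ^ n} := congrArg Ideal.span himg
  rw [this]
  apply le_antisymm
  · refine sup_le ?_ ?_
    · exact Ideal.span_mono (by simp)
    · have : mxy = Ideal.span {(X 0 : MvPolynomial (Fin 2) ℂ)} + Ideal.span {X 1} := by
        rw [mxy, Ideal.span_insert]; rfl
      rw [this]
      refine le_trans (add_pow_le' _ _ n) (sup_le ?_ ?_)
      · exact Ideal.span_mono (by simp)
      · rw [Ideal.span_singleton_pow]
        exact Ideal.span_mono (by simp)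
  · rw [Ideal.span_insert]
    refine sup_le le_sup_left ?_
    refine le_sup_of_le_right ?_
    rw [Ideal.span_singleton_le_iff_mem]
    exact Ideal.pow_mem_pow (Ideal.subset_span (by simp [mxy])) n

/-- partial sums of `i`. -/
def sig (i : ℕ → ℕ) (t : ℕ) : ℕ := ∑ j ∈ Finset.Icc 1 t, i j

noncomputable def eGen (i : ℕ → ℕ) (n t : ℕ) : Fin 2 →₀ ℕ :=
  Finsupp.single 0 (n - t) + Finsupp.single 1 (sig i t)

lemma sig_zero (i : ℕ → ℕ) : sig i 0 = 0 := by simp [sig]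

lemma sig_succ (i : ℕ → ℕ) (t : ℕ) : sig i (t + 1) = sig i t + i (t + 1) := by
  rw [sig, sig, Finset.sum_Icc_succ_top (by omega)]

lemma sig_mono (i : ℕ → ℕ) {a b : ℕ} (h : a ≤ b) : sig i a ≤ sig i b :=
  Finset.sum_le_sum_of_subset (Finset.Icc_subset_Icc le_rfl h)

lemma eGen_apply0 (i : ℕ → ℕ) (n t : ℕ) : eGen i n t 0 = n - t := by
  simp [eGen, Finsupp.single_apply]

lemma eGen_apply1 (i : ℕ → ℕ) (n t : ℕ) : eGen i n t 1 = sig i t := by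
  simp [eGen, Finsupp.single_apply]

lemma eGen_le_iff (i : ℕ → ℕ) (n t : ℕ) (m : Fin 2 →₀ ℕ) :
    eGen i n t ≤ m ↔ n - t ≤ m 0 ∧ sig i t ≤ m 1 := by
  rw [Finsupp.le_def]
  constructor
  · intro h
    exact ⟨by simpa [eGen_apply0] using h 0, by simpa [eGen_apply1] using h 1⟩
  · rintro ⟨h0, h1⟩ x
    fin_cases x
    · simpa [eGen_apply0] using h0
    · simpa [eGen_apply1] using h1

lemma prod_le (s : ℕ) (i : ℕ → ℕ)
    (hmono : ∀ a b, 1 ≤ a → a ≤ b → b ≤ s → i a ≤ i b) :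
    ∀ n, n ≤ s →
      ∏ k ∈ Finset.Icc 1 n, (Ideal.span {(X 0 : MvPolynomial (Fin 2) ℂ)} + mxy ^ i k) ≤
        Ideal.span ((fun e => monomial e (1:ℂ)) '' (eGen i n '' Set.Iic n)) := by
  intro n
  induction n with
  | zero =>
    intro _
    have h1 : (1 : MvPolynomial (Fin 2) ℂ) ∈
        Ideal.span ((fun e => monomial e (1:ℂ)) '' (eGen i 0 '' Set.Iic 0)) := by
      apply Ideal.subset_span
      refine ⟨eGen i 0 0, ⟨0, by simp, rfl⟩, ?_⟩
      have : eGen i 0 0 = 0 := by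
        ext x; fin_cases x <;> simp [eGen_apply0, eGen_apply1, sig_zero]
      rw [this]
      simp [monomial_zero']
    rw [Finset.Icc_eq_empty (by omega), Finset.prod_empty, Ideal.one_eq_top]
    exact le_of_eq ((Ideal.eq_top_iff_one _).2 h1).symm
  | succ n ih =>
    intro hns
    rw [← Finset.insert_Icc_right_eq_Icc_add_one (by omega),
      Finset.prod_insert (by simp)]
    calc (Ideal.span {(X 0 : MvPolynomial (Fin 2) ℂ)} + mxy ^ i (n+1)) *
          ∏ k ∈ Finset.Icc 1 n, (Ideal.span {(X 0 : MvPolynomial (Fin 2) ℂ)} + mxy ^ i k)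
        ≤ Ideal.span ((fun e => monomial e (1:ℂ)) ''
              ({Finsupp.single 0 1, Finsupp.single 1 (i (n+1))} : Set (Fin 2 →₀ ℕ))) *
          Ideal.span ((fun e => monomial e (1:ℂ)) '' (eGen i n '' Set.Iic n)) := by
          rw [← factor_eq]
          exact Ideal.mul_mono le_rfl (ih (by omega))
      _ ≤ Ideal.span ((fun e => monomial e (1:ℂ)) '' (eGen i (n+1) '' Set.Iic (n+1))) := by
          rw [Ideal.span_mul_span']
          rw [Ideal.span_le]
          rintro z hz
          rw [Set.mem_mul] at hz
          obtain ⟨za, ⟨ea, hea, rfl⟩, zb, ⟨eb, ⟨t, ht, rfl⟩, rfl⟩, rfl⟩ := hz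
          simp only [Set.mem_Iic] at ht
          rw [monomial_mul, mul_one]
          rw [SetLike.mem_coe, mem_ideal_span_monomial_image]
          intro xi hxi
          rw [support_monomial, if_neg one_ne_zero, Finset.mem_singleton] at hxi
          subst hxi
          rcases hea with rfl | hea
          · refine ⟨eGen i (n+1) t, ⟨t, by simp; omega, rfl⟩, ?_⟩
            rw [eGen_le_iff]
            constructor
            · simp [Finsupp.add_apply, Finsupp.single_apply, eGen_apply0]; omega
            · simp [Finsupp.add_apply, Finsupp.single_apply, eGen_apply1]
          · rw [Set.mem_singleton_iff] at hea
            subst hea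
            refine ⟨eGen i (n+1) (t+1), ⟨t+1, by simp; omega, rfl⟩, ?_⟩
            rw [eGen_le_iff]
            constructor
            · simp [Finsupp.add_apply, Finsupp.single_apply, eGen_apply0]
            · simp only [Finsupp.add_apply, Finsupp.single_apply, eGen_apply1,
                if_pos rfl, sig_succ]
              have : i (t+1) ≤ i (n+1) := hmono (t+1) (n+1) (by omega) (by omega) (by omega)
              simp [eGen_apply1]
              omega

lemma le_prod (i : ℕ → ℕ) (n : ℕ) :
    Ideal.span ((fun e => monomial e (1:ℂ)) '' (eGen i n '' Set.Iic n)) ≤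
      ∏ k ∈ Finset.Icc 1 n, (Ideal.span {(X 0 : MvPolynomial (Fin 2) ℂ)} + mxy ^ i k) := by
  rw [Ideal.span_le]
  rintro z ⟨e, ⟨t, ht, rfl⟩, rfl⟩
  simp only [Set.mem_Iic] at ht
  have key : (∏ k ∈ Finset.Icc 1 n,
      (if k ≤ t then (X 1 : MvPolynomial (Fin 2) ℂ) ^ i k else X 0)) =
      monomial (eGen i n t) 1 := by
    have hsplit : Finset.Icc 1 n = Finset.Icc 1 t ∪ Finset.Ioc t n := by
      ext x; simp only [Finset.mem_union, Finset.mem_Icc, Finset.mem_Ioc]; omega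
    have hdisj : Disjoint (Finset.Icc 1 t) (Finset.Ioc t n) := by
      rw [Finset.disjoint_left]
      intro x hx hx'
      simp only [Finset.mem_Icc] at hx
      simp only [Finset.mem_Ioc] at hx'
      omega
    rw [hsplit, Finset.prod_union hdisj]
    have h1 : (∏ k ∈ Finset.Icc 1 t,
        (if k ≤ t then (X 1 : MvPolynomial (Fin 2) ℂ) ^ i k else X 0)) =
        (X 1 : MvPolynomial (Fin 2) ℂ) ^ sig i t := by
      rw [Finset.prod_congr rfl (fun k hk => by
        rw [if_pos (Finset.mem_Icc.mp hk).2]), Finset.prod_pow_eq_pow_sum]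
      rfl
    have h2 : (∏ k ∈ Finset.Ioc t n,
        (if k ≤ t then (X 1 : MvPolynomial (Fin 2) ℂ) ^ i k else X 0)) =
        (X 0 : MvPolynomial (Fin 2) ℂ) ^ (n - t) := by
      rw [Finset.prod_congr rfl (fun k hk => by
        rw [if_neg (by simpa using (Finset.mem_Ioc.mp hk).1.not_ge)]),
        Finset.prod_const, Nat.card_Ioc]
    rw [h1, h2, X_pow_eq_monomial, X_pow_eq_monomial, monomial_mul, mul_one, eGen, add_comm]
  show (monomial (eGen i n t)) (1:ℂ) ∈ _
  rw [← key]
  apply Ideal.prod_mem_prod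
  intro k hk
  by_cases hkt : k ≤ t
  · rw [if_pos hkt]
    apply Ideal.mem_sup_right
    exact Ideal.pow_mem_pow (Ideal.subset_span (by simp [mxy])) _
  · rw [if_neg hkt]
    exact Ideal.mem_sup_left (Ideal.subset_span rfl)

lemma mem_K0_iff (s : ℕ) (i : ℕ → ℕ)
    (hmono : ∀ a b, 1 ≤ a → a ≤ b → b ≤ s → i a ≤ i b)
    (p : MvPolynomial (Fin 2) ℂ) :
    p ∈ ∏ k ∈ Finset.Icc 1 s, (Ideal.span {(X 0 : MvPolynomial (Fin 2) ℂ)} + mxy ^ i k) ↔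
      ∀ m ∈ p.support, s ≤ m 0 ∨ sig i (s - m 0) ≤ m 1 := by
  have heq : (∏ k ∈ Finset.Icc 1 s, (Ideal.span {(X 0 : MvPolynomial (Fin 2) ℂ)} + mxy ^ i k))
      = Ideal.span ((fun e => monomial e (1:ℂ)) '' (eGen i s '' Set.Iic s)) :=
    le_antisymm (prod_le s i hmono s le_rfl) (le_prod i s)
  rw [heq, mem_ideal_span_monomial_image]
  apply forall_congr'; intro m
  apply imp_congr_right; intro _
  constructor
  · rintro ⟨e, ⟨t, ht, rfl⟩, hle⟩
    simp only [Set.mem_Iic] at ht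
    rw [eGen_le_iff] at hle
    by_cases hm : s ≤ m 0
    · exact Or.inl hm
    · refine Or.inr ?_
      calc sig i (s - m 0) ≤ sig i t := sig_mono i (by omega)
        _ ≤ m 1 := hle.2
  · rintro (hm | hm)
    · exact ⟨eGen i s 0, ⟨0, by simp, rfl⟩, by rw [eGen_le_iff]; exact ⟨by omega, by simp [sig_zero]⟩⟩
    · exact ⟨eGen i s (s - m 0), ⟨s - m 0, by simp, rfl⟩,
        by rw [eGen_le_iff]; exact ⟨by omega, hm⟩⟩

lemma fin2_ext (m : Fin 2 →₀ ℕ) :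
    Finsupp.single 0 (m 0) + Finsupp.single 1 (m 1) = m := by
  ext x
  fin_cases x <;> simp [Finsupp.single_apply]

lemma iota_inj : Function.Injective
    (fun d : (_ : ℕ) × ℕ => Finsupp.single (0 : Fin 2) d.1 + Finsupp.single 1 d.2) := by
  intro a b hab
  have h0 := DFunLike.congr_fun hab (0 : Fin 2)
  have h1 := DFunLike.congr_fun hab (1 : Fin 2)
  simp only [Finsupp.add_apply, Finsupp.single_apply] at h0 h1
  norm_num at h0 h1
  exact Sigma.ext h0 (heq_of_eq h1)

lemma colength_K0 (s : ℕ) (i : ℕ → ℕ)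
    (hmono : ∀ a b, 1 ≤ a → a ≤ b → b ≤ s → i a ≤ i b) :
    Module.finrank ℂ (MvPolynomial (Fin 2) ℂ ⧸
        ∏ k ∈ Finset.Icc 1 s, (Ideal.span {(X 0 : MvPolynomial (Fin 2) ℂ)} + mxy ^ i k)) =
      ∑ k ∈ Finset.Icc 1 s, sig i k := by
  set K := ∏ k ∈ Finset.Icc 1 s,
      (Ideal.span {(X 0 : MvPolynomial (Fin 2) ℂ)} + mxy ^ i k) with hK
  set D : Finset ((_ : ℕ) × ℕ) :=
      (Finset.range s).sigma (fun a => Finset.range (sig i (s - a))) with hD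
  set ι : (_ : ℕ) × ℕ → (Fin 2 →₀ ℕ) :=
      fun d => Finsupp.single 0 d.1 + Finsupp.single 1 d.2 with hι
  have hι0 : ∀ d, ι d 0 = d.1 := fun d => by simp [hι, Finsupp.single_apply]
  have hι1 : ∀ d, ι d 1 = d.2 := fun d => by simp [hι, Finsupp.single_apply]
  set Φ : MvPolynomial (Fin 2) ℂ →ₗ[ℂ] (↥D → ℂ) :=
    { toFun := fun p d => coeff (ι d.1) p
      map_add' := fun p q => by funext d; simp [coeff_add]
      map_smul' := fun c p => by funext d; simp [coeff_smul] } with hΦ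
  have hmemD : ∀ d : (_ : ℕ) × ℕ, d ∈ D ↔ d.1 < s ∧ d.2 < sig i (s - d.1) := by
    intro d; simp [hD, Finset.mem_sigma]
  have hker : LinearMap.ker Φ = Submodule.restrictScalars ℂ K := by
    ext p
    rw [LinearMap.mem_ker, Submodule.restrictScalars_mem, hK,
      mem_K0_iff s i hmono, funext_iff]
    constructor
    · intro h m hm
      by_contra hcon
      push_neg at hcon
      have hd : (⟨m 0, m 1⟩ : (_ : ℕ) × ℕ) ∈ D := by
        rw [hmemD]; exact hcon
      have := h ⟨⟨m 0, m 1⟩, hd⟩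
      simp only [hΦ, LinearMap.coe_mk, AddHom.coe_mk] at this
      rw [show ι ⟨m 0, m 1⟩ = m from fin2_ext m] at this
      exact (mem_support_iff.mp hm) this
    · intro h d
      show coeff (ι d.1) p = 0
      by_contra hcon
      have hsup : ι d.1 ∈ p.support := mem_support_iff.mpr hcon
      have := h (ι d.1) hsup
      rw [hι0, hι1] at this
      have hd := (hmemD d.1).mp d.2
      omega
  have hsurj : Function.Surjective Φ := by
    intro f
    refine ⟨∑ d ∈ D.attach, monomial (ι d.1) (f d), ?_⟩
    funext d₀
    show coeff (ι d₀.1) (∑ d ∈ D.attach, monomial (ι d.1) (f d)) = f d₀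
    rw [MvPolynomial.coeff_sum]
    have hco : ∀ d ∈ D.attach,
        coeff (ι d₀.1) (monomial (ι d.1) (f d)) = if d = d₀ then f d else 0 := by
      intro d _
      rw [coeff_monomial]
      by_cases h : d = d₀
      · rw [if_pos h, if_pos (by rw [h])]
      · rw [if_neg h, if_neg (fun hc => h (Subtype.ext (iota_inj hc)))]
    rw [Finset.sum_congr rfl hco, Finset.sum_ite_eq' D.attach d₀ (fun d => f d),
      if_pos (Finset.mem_attach _ _)]
  have e2 : (MvPolynomial (Fin 2) ℂ ⧸ LinearMap.ker Φ) ≃ₗ[ℂ] (↥D → ℂ) :=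
    Φ.quotKerEquivOfSurjective hsurj
  set f : MvPolynomial (Fin 2) ℂ →ₗ[ℂ] (MvPolynomial (Fin 2) ℂ ⧸ K) :=
    (Ideal.Quotient.mkₐ ℂ K).toLinearMap with hf
  have hfsurj : Function.Surjective f := Ideal.Quotient.mkₐ_surjective ℂ K
  have hfker : LinearMap.ker f = Submodule.restrictScalars ℂ K := by
    ext p
    rw [LinearMap.mem_ker, Submodule.restrictScalars_mem]
    show Ideal.Quotient.mkₐ ℂ K p = 0 ↔ _
    rw [Ideal.Quotient.mkₐ_eq_mk, Ideal.Quotient.eq_zero_iff_mem]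
  have e1 : (MvPolynomial (Fin 2) ℂ ⧸ LinearMap.ker f) ≃ₗ[ℂ]
      (MvPolynomial (Fin 2) ℂ ⧸ K) := f.quotKerEquivOfSurjective hfsurj
  rw [← e1.finrank_eq]
  rw [hfker, ← hker, e2.finrank_eq]
  rw [Module.finrank_fintype_fun_eq_card, Fintype.card_coe]
  rw [hD, Finset.card_sigma]
  simp only [Finset.card_range]
  rw [← Finset.sum_range_reflect (fun a => sig i (s - a)) s]
  rw [Finset.sum_congr rfl (fun j hj => by
    rw [show s - (s - 1 - j) = 1 + j by
      have := Finset.mem_range.mp hj; omega])]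
  rw [show Finset.Icc 1 s = Finset.Ico 1 (s+1) by rw [Finset.Ico_add_one_right_eq_Icc],
    Finset.sum_Ico_eq_sum_range]
  simp

/-- The shear automorphism `x ↦ x + g(y)`, `y ↦ y`. -/
noncomputable def tau (g : Polynomial ℂ) : MvPolynomial (Fin 2) ℂ ≃ₐ[ℂ] MvPolynomial (Fin 2) ℂ :=
  AlgEquiv.ofAlgHom
    (aeval (fun j : Fin 2 => if j = 0 then X 0 + Polynomial.aeval (X 1) g else X j))
    (aeval (fun j : Fin 2 => if j = 0 then X 0 - Polynomial.aeval (X 1) g else X j))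
    (by
      apply MvPolynomial.algHom_ext
      intro j
      fin_cases j
      · simp [← Polynomial.aeval_algHom_apply]
      · simp)
    (by
      apply MvPolynomial.algHom_ext
      intro j
      fin_cases j
      · simp [← Polynomial.aeval_algHom_apply]
      · simp)

lemma tau_X0 (g : Polynomial ℂ) :
    tau g (X 0) = X 0 + Polynomial.aeval (X 1 : MvPolynomial (Fin 2) ℂ) g := by
  simp [tau, AlgEquiv.ofAlgHom]

lemma tau_X1 (g : Polynomial ℂ) : tau g (X 1) = X 1 := by
  simp [tau, AlgEquiv.ofAlgHom]

lemma gy_mem (g : Polynomial ℂ) (hg0 : g.eval 0 = 0) :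
    Polynomial.aeval (X 1 : MvPolynomial (Fin 2) ℂ) g ∈
      Ideal.span {(X 1 : MvPolynomial (Fin 2) ℂ)} := by
  obtain ⟨q, rfl⟩ : Polynomial.X ∣ g :=
    Polynomial.X_dvd_iff.mpr (by rwa [Polynomial.coeff_zero_eq_eval_zero])
  rw [map_mul, Polynomial.aeval_X]
  exact Ideal.mul_mem_right _ _ (Ideal.subset_span rfl)

lemma map_tau_mxy (g : Polynomial ℂ) (hg0 : g.eval 0 = 0) :
    Ideal.map (tau g : MvPolynomial (Fin 2) ℂ →+* MvPolynomial (Fin 2) ℂ) mxy = mxy := by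
  have hgy := gy_mem g hg0
  rw [mxy, Ideal.map_span, Set.image_pair]
  rw [show (tau g : MvPolynomial (Fin 2) ℂ →+* MvPolynomial (Fin 2) ℂ) (X 0) =
    X 0 + Polynomial.aeval (X 1 : MvPolynomial (Fin 2) ℂ) g from tau_X0 g,
    show (tau g : MvPolynomial (Fin 2) ℂ →+* MvPolynomial (Fin 2) ℂ) (X 1) =
    X 1 from tau_X1 g]
  apply le_antisymm
  · rw [Ideal.span_le]
    rintro z (rfl | rfl)
    · exact Ideal.add_mem _ (Ideal.subset_span (by simp))
        (Ideal.span_mono (by simp) hgy)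
    · exact Ideal.subset_span (by simp)
  · rw [Ideal.span_le]
    rintro z (rfl | rfl)
    · have h1 : (X 0 + Polynomial.aeval (X 1 : MvPolynomial (Fin 2) ℂ) g) ∈
          Ideal.span {X 0 + Polynomial.aeval (X 1 : MvPolynomial (Fin 2) ℂ) g,
            (X 1 : MvPolynomial (Fin 2) ℂ)} := Ideal.subset_span (by simp)
      have h2 : Polynomial.aeval (X 1 : MvPolynomial (Fin 2) ℂ) g ∈
          Ideal.span {X 0 + Polynomial.aeval (X 1 : MvPolynomial (Fin 2) ℂ) g,
            (X 1 : MvPolynomial (Fin 2) ℂ)} :=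
        Ideal.span_mono (by simp) hgy
      simpa using Ideal.sub_mem _ h1 h2
    · exact Ideal.subset_span (by simp)

lemma map_prod_ideal {R S : Type*} [CommRing R] [CommRing S] (f : R →+* S)
    {ι : Type*} (t : Finset ι) (I : ι → Ideal R) :
    Ideal.map f (∏ k ∈ t, I k) = ∏ k ∈ t, Ideal.map f (I k) := by
  classical
  induction t using Finset.induction_on with
  | empty => simp [Ideal.map_top]
  | insert a t hnotmem ih =>
    rw [Finset.prod_insert hnotmem, Finset.prod_insert hnotmem, Ideal.map_mul, ih]


/-- **Colength of a tower.** If `1 ≤ i₁ < ⋯ < i_s` and `g ∈ ℂ[y]` satisfies `g(0) = 0`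
and `deg g < i_s`, then the tower `K = ∏ₖ ((x + g(y)) + m^{iₖ})` has colength
`∑_{k=1}^s ∑_{j=1}^k i_j`. -/
theorem tower_colength (s : ℕ) (hs : 1 ≤ s) (i : ℕ → ℕ) (hi1 : 1 ≤ i 1)
    (hmono : ∀ k, 1 ≤ k → k < s → i k < i (k + 1))
    (g : Polynomial ℂ) (hg0 : g.eval 0 = 0) (hgdeg : g.natDegree < i s) :
    Module.finrank ℂ
      (MvPolynomial (Fin 2) ℂ ⧸
        ∏ k ∈ Finset.Icc 1 s,
          (Ideal.span {(X 0 : MvPolynomial (Fin 2) ℂ) +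
              Polynomial.aeval (X 1 : MvPolynomial (Fin 2) ℂ) g} + mxy ^ i k)) =
      ∑ k ∈ Finset.Icc 1 s, ∑ j ∈ Finset.Icc 1 k, i j := by
  have hmono' : ∀ a b, 1 ≤ a → a ≤ b → b ≤ s → i a ≤ i b := by
    intro a b ha hab hbs
    induction b with
    | zero => omega
    | succ b ih =>
      rcases Nat.lt_or_ge a (b + 1) with h | h
      · have h1 : i b < i (b + 1) := hmono b (by omega) (by omega)
        have h2 : i a ≤ i b := ih (by omega) (by omega)
        omega
      · have : a = b + 1 := by omega
        subst this
        exact le_rfl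
  have hmap : (∏ k ∈ Finset.Icc 1 s,
        (Ideal.span {(X 0 : MvPolynomial (Fin 2) ℂ) +
            Polynomial.aeval (X 1 : MvPolynomial (Fin 2) ℂ) g} + mxy ^ i k)) =
      Ideal.map ((tau g : MvPolynomial (Fin 2) ℂ ≃ₐ[ℂ] MvPolynomial (Fin 2) ℂ) :
          MvPolynomial (Fin 2) ℂ →+* MvPolynomial (Fin 2) ℂ)
        (∏ k ∈ Finset.Icc 1 s,
          (Ideal.span {(X 0 : MvPolynomial (Fin 2) ℂ)} + mxy ^ i k)) := by
    rw [map_prod_ideal]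
    apply Finset.prod_congr rfl
    intro k _
    rw [Ideal.add_eq_sup, Ideal.add_eq_sup, Ideal.map_sup, Ideal.map_pow,
      map_tau_mxy g hg0, Ideal.map_span, Set.image_singleton]
    congr 2
    exact congrArg (fun z => ({z} : Set (MvPolynomial (Fin 2) ℂ))) (tau_X0 g).symm
  have equiv := Ideal.quotientEquivAlg
    (∏ k ∈ Finset.Icc 1 s, (Ideal.span {(X 0 : MvPolynomial (Fin 2) ℂ)} + mxy ^ i k))
    (∏ k ∈ Finset.Icc 1 s,
      (Ideal.span {(X 0 : MvPolynomial (Fin 2) ℂ) +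
          Polynomial.aeval (X 1 : MvPolynomial (Fin 2) ℂ) g} + mxy ^ i k))
    (tau g) hmap
  rw [← equiv.toLinearEquiv.finrank_eq]
  rw [colength_K0 s i hmono']
  rfl
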